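/- Let (X_i, Y_i), i = 1,...,n be i.i.d. from a finite joint distribution P. If a sequence of set-valued predictors Γ_n satisfies limsup_{n→∞} (1/n)·log E[|Γ_n|] < H(Y|X), then the confidence vanishes: lim_{n→∞} P((Y_1,...,Y_n) ∈ Γ_n(X_1,...,X_n)) = 0. -/

import Mathlib

open Finset

section aux
variable {Z : Type*} [Fintype Z]

lemma sum_fun_prod {n : ℕ} (h : Fin n → Z → ℝ) :
    ∑ zs : Fin n → Z, ∏ k, h k (zs k) = ∏ k, ∑ z, h k z :=
  (Fintype.prod_sum h).symm

lemma exp_single {n : ℕ} (p g : Z → ℝ) (hp1 : ∑ z, p z = 1) (i : Fin n) :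
    ∑ zs : Fin n → Z, (∏ k, p (zs k)) * g (zs i) = ∑ z, p z * g z := by
  have h1 : ∀ zs : Fin n → Z, (∏ k, p (zs k)) * g (zs i)
      = ∏ k, (p (zs k) * if k = i then g (zs k) else 1) := by
    intro zs
    rw [Finset.prod_mul_distrib]
    congr 1
    simp [Finset.prod_ite_eq']
  rw [Finset.sum_congr rfl (fun zs _ => h1 zs),
    sum_fun_prod (fun k z => p z * if k = i then g z else 1)]
  have h2 : ∀ k : Fin n, (∑ z, p z * if k = i then g z else 1)
      = if k = i then ∑ z, p z * g z else 1 := by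
    intro k; by_cases hk : k = i <;> simp [hk, hp1]
  rw [Finset.prod_congr rfl (fun k _ => h2 k)]
  simp [Finset.prod_ite_eq']

lemma exp_pair {n : ℕ} (p g : Z → ℝ) (hp1 : ∑ z, p z = 1) {i j : Fin n} (hij : i ≠ j) :
    ∑ zs : Fin n → Z, (∏ k, p (zs k)) * (g (zs i) * g (zs j))
      = (∑ z, p z * g z) * (∑ z, p z * g z) := by
  have h1 : ∀ zs : Fin n → Z, (∏ k, p (zs k)) * (g (zs i) * g (zs j))
      = ∏ k, (p (zs k) * ((if k = i then g (zs k) else 1) * (if k = j then g (zs k) else 1))) := by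
    intro zs
    rw [Finset.prod_mul_distrib, Finset.prod_mul_distrib]
    simp [Finset.prod_ite_eq']
  rw [Finset.sum_congr rfl (fun zs _ => h1 zs),
    sum_fun_prod (fun k z => p z * ((if k = i then g z else 1) * (if k = j then g z else 1)))]
  have h2 : ∀ k : Fin n,
      (∑ z, p z * ((if k = i then g z else 1) * (if k = j then g z else 1)))
      = (if k = i then (∑ z, p z * g z) else 1) * (if k = j then (∑ z, p z * g z) else 1) := by
    intro k
    by_cases hk : k = i
    · subst hk
      have : k ≠ j := hij
      simp [this]
    · have hji : ¬ j = i := fun h => hij h.symm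
      by_cases hk2 : k = j <;> simp [hk, hk2, hji, hp1]
  rw [Finset.prod_congr rfl (fun k _ => h2 k), Finset.prod_mul_distrib]
  simp [Finset.prod_ite_eq']

end aux

section aux2
variable {Z : Type*} [Fintype Z]

lemma exp_S {n : ℕ} (p g : Z → ℝ) (hp1 : ∑ z, p z = 1) :
    ∑ zs : Fin n → Z, (∏ k, p (zs k)) * (∑ i, g (zs i))
      = n * ∑ z, p z * g z := by
  have : ∀ zs : Fin n → Z, (∏ k, p (zs k)) * (∑ i, g (zs i))
      = ∑ i, (∏ k, p (zs k)) * g (zs i) := fun zs => Finset.mul_sum _ _ _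
  rw [Finset.sum_congr rfl (fun zs _ => this zs), Finset.sum_comm]
  rw [Finset.sum_congr rfl (fun i _ => exp_single p g hp1 i)]
  simp [mul_comm]

lemma exp_S_sq {n : ℕ} (p g : Z → ℝ) (hp1 : ∑ z, p z = 1) :
    ∑ zs : Fin n → Z, (∏ k, p (zs k)) * (∑ i, g (zs i))^2
      = n * (∑ z, p z * (g z * g z))
        + ((n : ℝ) * ((n : ℝ) - 1)) * ((∑ z, p z * g z) * (∑ z, p z * g z)) := by
  have h1 : ∀ zs : Fin n → Z, (∏ k, p (zs k)) * (∑ i, g (zs i))^2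
      = ∑ i, ∑ j, (∏ k, p (zs k)) * (g (zs i) * g (zs j)) := by
    intro zs
    rw [sq, Finset.sum_mul_sum]
    rw [Finset.mul_sum]
    refine Finset.sum_congr rfl fun i _ => ?_
    rw [Finset.mul_sum]
  rw [Finset.sum_congr rfl (fun zs _ => h1 zs), Finset.sum_comm]
  have h2 : ∀ i : Fin n, ∑ zs : Fin n → Z, ∑ j, (∏ k, p (zs k)) * (g (zs i) * g (zs j))
      = ∑ j, ∑ zs : Fin n → Z, (∏ k, p (zs k)) * (g (zs i) * g (zs j)) :=
    fun i => Finset.sum_comm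
  rw [Finset.sum_congr rfl (fun i _ => h2 i)]
  have h3 : ∀ i j : Fin n, ∑ zs : Fin n → Z, (∏ k, p (zs k)) * (g (zs i) * g (zs j))
      = if j = i then (∑ z, p z * (g z * g z))
        else (∑ z, p z * g z) * (∑ z, p z * g z) := by
    intro i j
    by_cases hij : j = i
    · subst hij
      rw [if_pos rfl]
      exact exp_single p (fun z => g z * g z) hp1 j
    · rw [if_neg hij]
      exact exp_pair p g hp1 (fun h => hij h.symm)
  rw [Finset.sum_congr rfl (fun i _ => Finset.sum_congr rfl (fun j _ => h3 i j))]
  have h4 : ∀ i : Fin n,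
      (∑ j : Fin n, if j = i then (∑ z, p z * (g z * g z))
        else (∑ z, p z * g z) * (∑ z, p z * g z))
      = (∑ z, p z * (g z * g z)) - (∑ z, p z * g z) * (∑ z, p z * g z)
        + n * ((∑ z, p z * g z) * (∑ z, p z * g z)) := by
    intro i
    have : ∀ j : Fin n, (if j = i then (∑ z, p z * (g z * g z))
        else (∑ z, p z * g z) * (∑ z, p z * g z))
        = (if j = i then (∑ z, p z * (g z * g z)) - (∑ z, p z * g z) * (∑ z, p z * g z) else 0)
          + (∑ z, p z * g z) * (∑ z, p z * g z) := by
      intro j; by_cases hj : j = i <;> simp [hj]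
    rw [Finset.sum_congr rfl (fun j _ => this j), Finset.sum_add_distrib,
      Finset.sum_ite_eq' Finset.univ i, Finset.sum_const]
    simp [mul_comm]
  rw [Finset.sum_congr rfl (fun i _ => h4 i), Finset.sum_const]
  simp only [Finset.card_univ, Fintype.card_fin, nsmul_eq_mul]
  ring

lemma chebyshev_bound {n : ℕ} (hn : 1 ≤ n) (p g : Z → ℝ)
    (hp0 : ∀ z, 0 ≤ p z) (hp1 : ∑ z, p z = 1) {δ : ℝ} (hδ : 0 < δ) :
    ∑ zs : Fin n → Z, (∏ k, p (zs k)) *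
        (if (∑ i, g (zs i)) < (n : ℝ) * ((∑ z, p z * g z) - δ) then (1:ℝ) else 0)
      ≤ (∑ z, p z * (g z * g z)) / (n * δ^2) := by
  set m := ∑ z, p z * g z with hm
  set W := ∑ z, p z * (g z * g z) with hW
  have hnR : (0:ℝ) < n := by exact_mod_cast hn
  have hmass : ∑ zs : Fin n → Z, (∏ k, p (zs k)) = 1 := by
    rw [sum_fun_prod (fun _ z => p z)]
    simp [hp1]
  have hvar : ∑ zs : Fin n → Z, (∏ k, p (zs k)) * ((∑ i, g (zs i)) - n * m)^2
      = n * W - n * (m * m) := by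
    have expand : ∀ zs : Fin n → Z,
        (∏ k, p (zs k)) * ((∑ i, g (zs i)) - n * m)^2
        = (∏ k, p (zs k)) * (∑ i, g (zs i))^2
          - (2 * (n * m)) * ((∏ k, p (zs k)) * (∑ i, g (zs i)))
          + ((n : ℝ) * m)^2 * (∏ k, p (zs k)) := by
      intro zs; ring
    rw [Finset.sum_congr rfl (fun zs _ => expand zs)]
    rw [Finset.sum_add_distrib, Finset.sum_sub_distrib, ← Finset.mul_sum, ← Finset.mul_sum]
    rw [exp_S_sq p g hp1, exp_S p g hp1, hmass]
    ring
  have key : ∀ zs : Fin n → Z, (∏ k, p (zs k)) *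
        (if (∑ i, g (zs i)) < (n : ℝ) * (m - δ) then (1:ℝ) else 0)
      ≤ (∏ k, p (zs k)) * (((∑ i, g (zs i)) - n * m)^2 / ((n : ℝ) * δ)^2) := by
    intro zs
    have hprod : (0:ℝ) ≤ ∏ k, p (zs k) := Finset.prod_nonneg fun k _ => hp0 _
    apply mul_le_mul_of_nonneg_left _ hprod
    by_cases h : (∑ i, g (zs i)) < (n : ℝ) * (m - δ)
    · rw [if_pos h, le_div_iff₀ (by positivity), one_mul]
      have h1 : (n:ℝ) * δ ≤ (n : ℝ) * m - (∑ i, g (zs i)) := by nlinarith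
      have h2 : ((n:ℝ) * δ)^2 ≤ ((n : ℝ) * m - (∑ i, g (zs i)))^2 :=
        pow_le_pow_left₀ (by positivity) h1 2
      calc ((n:ℝ) * δ)^2 ≤ ((n : ℝ) * m - (∑ i, g (zs i)))^2 := h2
        _ = ((∑ i, g (zs i)) - n * m)^2 := by ring
    · rw [if_neg h]; positivity
  calc ∑ zs : Fin n → Z, (∏ k, p (zs k)) *
        (if (∑ i, g (zs i)) < (n : ℝ) * (m - δ) then (1:ℝ) else 0)
      ≤ ∑ zs : Fin n → Z, (∏ k, p (zs k)) * (((∑ i, g (zs i)) - n * m)^2 / ((n : ℝ) * δ)^2) :=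
        Finset.sum_le_sum fun zs _ => key zs
    _ = (∑ zs : Fin n → Z, (∏ k, p (zs k)) * ((∑ i, g (zs i)) - n * m)^2) / ((n : ℝ) * δ)^2 := by
        rw [Finset.sum_congr rfl (fun (zs : Fin n → Z) _ => (mul_div_assoc _ _ _).symm),
          ← Finset.sum_div]
    _ = (n * W - n * (m * m)) / ((n : ℝ) * δ)^2 := by rw [hvar]
    _ ≤ (n * W) / ((n : ℝ) * δ)^2 := by
        apply div_le_div_of_nonneg_right ?_ (by positivity)
        nlinarith [mul_self_nonneg m]
    _ = W / (n * δ^2) := by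
        field_simp

lemma sum_pair_transfer {X Y : Type*} [Fintype X] [Fintype Y] {n : ℕ}
    (F : (Fin n → X × Y) → ℝ) :
    ∑ xs : Fin n → X, ∑ ys : Fin n → Y, F (fun i => (xs i, ys i))
      = ∑ zs : Fin n → X × Y, F zs := by
  rw [← Fintype.sum_prod_type (f := fun p : (Fin n → X) × (Fin n → Y) =>
    F (fun i => (p.1 i, p.2 i)))]
  exact Fintype.sum_equiv (Equiv.arrowProdEquivProdArrow (Fin n) (fun _ => X) (fun _ => Y)).symm _ _ (fun p => rfl)

end aux2

/-- **strong converse.** For i.i.d. pairs `(X_i,Y_i) ~ P` on finite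
alphabets, if a sequence of set-valued predictors `Γ n` has efficiency rate
`limsup_n (1/n)·log E[|Γ n|] < H(Y|X)`, then the coverage probability
`cov n = P((Y_1,…,Y_n) ∈ Γ n (X_1,…,X_n))` tends to `0`. -/
theorem strong_converse_below_conditional_entropy
    {X Y : Type*} [Fintype X] [Fintype Y] [DecidableEq Y]
    (P : X → Y → ℝ) (hPnonneg : ∀ x y, 0 ≤ P x y)
    (hPsum : ∑ x, ∑ y, P x y = 1)
    (Γ : (n : ℕ) → ((Fin n → X) → Finset (Fin n → Y)))
    (cov : ℕ → ℝ)
    (hcov : ∀ n, cov n = ∑ xs : Fin n → X, ∑ ys : Fin n → Y,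
        (∏ i, P (xs i) (ys i)) * (if ys ∈ Γ n xs then 1 else 0))
    (hrate : Filter.limsup (fun n =>
        Real.log (∑ xs : Fin n → X,
          (∏ i, ∑ y, P (xs i) y) * (((Γ n xs).card : ℝ))) / n) Filter.atTop <
        -∑ x, ∑ y, P x y * Real.log (P x y / ∑ y', P x y')) :
    Filter.Tendsto cov Filter.atTop (nhds 0) := by
  classical
  -- basic definitions
  set p : X × Y → ℝ := fun z => P z.1 z.2 with hp
  set q : X → ℝ := fun x => ∑ y, P x y with hqdef
  set g : X × Y → ℝ := fun z => Real.log (q z.1) - Real.log (p z) with hg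
  have hp0 : ∀ z : X × Y, 0 ≤ p z := fun z => hPnonneg _ _
  have hp1 : ∑ z : X × Y, p z = 1 := by
    rw [Fintype.sum_prod_type]; exact hPsum
  have hqle : ∀ x y, P x y ≤ q x := fun x y =>
    Finset.single_le_sum (fun y _ => hPnonneg x y) (Finset.mem_univ y)
  have hq0 : ∀ x, 0 ≤ q x := fun x => Finset.sum_nonneg fun y _ => hPnonneg x y
  set H : ℝ := ∑ z : X × Y, p z * g z with hH
  set W : ℝ := ∑ z : X × Y, p z * (g z * g z) with hW
  -- identify H with the conditional entropy expression
  have hHeq : (-∑ x, ∑ y, P x y * Real.log (P x y / ∑ y', P x y')) = H := by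
    rw [hH, Fintype.sum_prod_type, neg_eq_iff_eq_neg, ← Finset.sum_neg_distrib]
    refine Finset.sum_congr rfl fun x _ => ?_
    rw [← Finset.sum_neg_distrib]
    refine Finset.sum_congr rfl fun y _ => ?_
    show P x y * Real.log (P x y / ∑ y', P x y')
      = -(P x y * (Real.log (q x) - Real.log (P x y)))
    rcases eq_or_lt_of_le (hPnonneg x y) with h | h
    · simp [← h]
    · have hqx : 0 < q x := lt_of_lt_of_le h (hqle x y)
      have hqq : (∑ y', P x y') = q x := rfl
      rw [hqq, Real.log_div (ne_of_gt h) (ne_of_gt hqx)]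
      ring
  rw [hHeq] at hrate
  -- E n : expected size
  set E : ℕ → ℝ := fun n => ∑ xs : Fin n → X,
    (∏ i, ∑ y, P (xs i) y) * (((Γ n xs).card : ℝ)) with hE
  have hE0 : ∀ n, 0 ≤ E n := by
    intro n
    apply Finset.sum_nonneg
    intro xs _
    exact mul_nonneg (Finset.prod_nonneg fun i _ =>
      Finset.sum_nonneg fun y _ => hPnonneg _ _) (Nat.cast_nonneg _)
  -- choose δ
  set L := Filter.limsup (fun n => Real.log (E n) / (n : ℝ)) Filter.atTop with hL
  have hLH : L < H := hrate
  set δ : ℝ := (H - L) / 3 with hδdef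
  have hδ : 0 < δ := by rw [hδdef]; linarith
  have hδlt : L < H - 2 * δ := by rw [hδdef]; linarith
  -- Y is nonempty
  rcases isEmpty_or_nonempty Y with hY | hY
  · exfalso; simp [hqdef] at hPsum
  have hcardY : (1 : ℝ) ≤ (Fintype.card Y : ℝ) := by
    exact_mod_cast Fintype.card_pos
  have hlogY : 0 ≤ Real.log (Fintype.card Y) := Real.log_nonneg hcardY
  -- boundedness of the rate sequence
  have hEub : ∀ n, Real.log (E n) / (n : ℝ) ≤ Real.log (Fintype.card Y) := by
    intro n
    rcases Nat.eq_zero_or_pos n with h0 | hpos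
    · subst h0; simpa using hlogY
    have hnR : (0:ℝ) < n := by exact_mod_cast hpos
    have hEcap : E n ≤ ((Fintype.card Y : ℝ))^n := by
      have step : E n ≤ ∑ xs : Fin n → X,
          (∏ i, ∑ y, P (xs i) y) * ((Fintype.card Y : ℝ))^n := by
        apply Finset.sum_le_sum
        intro xs _
        apply mul_le_mul_of_nonneg_left ?_ (Finset.prod_nonneg fun i _ =>
          Finset.sum_nonneg fun y _ => hPnonneg _ _)
        have h1 : (Γ n xs).card ≤ Fintype.card (Fin n → Y) := Finset.card_le_univ _
        have h2 : Fintype.card (Fin n → Y) = Fintype.card Y ^ n := by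
          simp [Fintype.card_fun]
        calc ((Γ n xs).card : ℝ) ≤ (Fintype.card (Fin n → Y) : ℝ) := by exact_mod_cast h1
          _ = ((Fintype.card Y : ℝ))^n := by rw [h2]; push_cast; ring
      refine step.trans (le_of_eq ?_)
      rw [← Finset.sum_mul]
      have hone : ∑ xs : Fin n → X, ∏ i, ∑ y, P (xs i) y = 1 := by
        rw [sum_fun_prod (fun (_ : Fin n) x => ∑ y, P x y)]
        simp [hPsum]
        rw [show (∑ z, ∑ y, P z y) = 1 from hPsum, one_pow]
      rw [hone, one_mul]
    have hlogle : Real.log (E n) ≤ (n : ℝ) * Real.log (Fintype.card Y) := by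
      rcases eq_or_lt_of_le (hE0 n) with h | h
      · rw [← h, Real.log_zero]
        exact mul_nonneg (Nat.cast_nonneg n) hlogY
      · calc Real.log (E n) ≤ Real.log (((Fintype.card Y : ℝ))^n) :=
            Real.log_le_log h hEcap
          _ = (n : ℝ) * Real.log (Fintype.card Y) := by rw [Real.log_pow]
    rw [div_le_iff₀ hnR]
    linarith
  -- eventual bound on E n
  have hEbound : ∀ᶠ n in Filter.atTop, E n ≤ Real.exp ((n : ℝ) * (H - 2*δ)) := by
    have h1 : ∀ᶠ n in Filter.atTop, Real.log (E n) / (n : ℝ) < H - 2*δ :=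
      Filter.eventually_lt_of_limsup_lt hδlt
        (Filter.isBoundedUnder_of ⟨Real.log (Fintype.card Y), hEub⟩)
    filter_upwards [h1, Filter.eventually_ge_atTop 1] with n hn hn1
    rcases eq_or_lt_of_le (hE0 n) with h | h
    · rw [← h]; positivity
    · have hnR : (0:ℝ) < n := by exact_mod_cast hn1
      have hln : Real.log (E n) < (n : ℝ) * (H - 2*δ) := by
        rw [div_lt_iff₀ hnR] at hn; linarith
      calc E n = Real.exp (Real.log (E n)) := (Real.exp_log h).symm
        _ ≤ Real.exp ((n : ℝ) * (H - 2*δ)) := Real.exp_le_exp.mpr (le_of_lt hln)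
  -- main eventual inequality
  have hmain : ∀ᶠ n in Filter.atTop,
      cov n ≤ Real.exp (-((n : ℝ) * δ)) + W / δ^2 * (1 / (n : ℝ)) := by
    filter_upwards [hEbound, Filter.eventually_ge_atTop 1] with n hEb hn1
    have hnR : (0:ℝ) < n := by exact_mod_cast hn1
    set c : ℝ := (n : ℝ) * (H - δ) with hc
    -- pointwise split
    have split : ∀ (xs : Fin n → X) (ys : Fin n → Y),
        (∏ i, P (xs i) (ys i)) * (if ys ∈ Γ n xs then (1:ℝ) else 0)
        ≤ (∏ i, ∑ y, P (xs i) y) * Real.exp (-c) * (if ys ∈ Γ n xs then (1:ℝ) else 0)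
          + (∏ i, P (xs i) (ys i)) *
            (if (∑ i, g (xs i, ys i)) < (n:ℝ) * (H - δ) then (1:ℝ) else 0) := by
      intro xs ys
      have hPprod : (0:ℝ) ≤ ∏ i, P (xs i) (ys i) :=
        Finset.prod_nonneg fun i _ => hPnonneg _ _
      have hqprod : (0:ℝ) ≤ ∏ i, ∑ y, P (xs i) y :=
        Finset.prod_nonneg fun i _ => Finset.sum_nonneg fun y _ => hPnonneg _ _
      by_cases hS : (∑ i, g (xs i, ys i)) < (n:ℝ) * (H - δ)
      · rw [if_pos hS, mul_one]
        have h2 : (∏ i, P (xs i) (ys i)) * (if ys ∈ Γ n xs then (1:ℝ) else 0)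
            ≤ (∏ i, P (xs i) (ys i)) * 1 := by
          apply mul_le_mul_of_nonneg_left _ hPprod
          split <;> norm_num
        have h3 : 0 ≤ (∏ i, ∑ y, P (xs i) y) * Real.exp (-c)
            * (if ys ∈ Γ n xs then (1:ℝ) else 0) := by
          apply mul_nonneg (mul_nonneg hqprod (le_of_lt (Real.exp_pos _)))
          split <;> norm_num
        linarith
      · rw [if_neg hS, mul_zero, add_zero]
        by_cases hmem : ys ∈ Γ n xs
        · rw [if_pos hmem, mul_one, mul_one]
          by_cases hzero : ∃ i, P (xs i) (ys i) = 0
          · obtain ⟨i0, hi0⟩ := hzero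
            have hz : ∏ i, P (xs i) (ys i) = 0 :=
              Finset.prod_eq_zero (Finset.mem_univ i0) hi0
            rw [hz]; positivity
          · push_neg at hzero
            have hpos : ∀ i, 0 < P (xs i) (ys i) := fun i =>
              lt_of_le_of_ne (hPnonneg _ _) (Ne.symm (hzero i))
            have hqpos : ∀ i, 0 < q (xs i) := fun i =>
              lt_of_lt_of_le (hpos i) (hqle _ _)
            have hprod_eq : ∏ i, P (xs i) (ys i)
                = (∏ i, ∑ y, P (xs i) y) * Real.exp (-(∑ i, g (xs i, ys i))) := by
              have hterm : ∀ i : Fin n, P (xs i) (ys i)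
                  = (∑ y, P (xs i) y) * Real.exp (-(g (xs i, ys i))) := by
                intro i
                have hgu : g (xs i, ys i)
                    = Real.log (q (xs i)) - Real.log (P (xs i) (ys i)) := rfl
                have hqq : (∑ y, P (xs i) y) = q (xs i) := rfl
                rw [hgu, hqq, neg_sub, Real.exp_sub, Real.exp_log (hpos i),
                  Real.exp_log (hqpos i), mul_comm,
                  div_mul_cancel₀ _ (ne_of_gt (hqpos i))]
              rw [Finset.prod_congr rfl (fun i _ => hterm i), Finset.prod_mul_distrib]
              congr 1
              rw [← Real.exp_sum]
              congr 1
              rw [← Finset.sum_neg_distrib]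
            rw [hprod_eq]
            apply mul_le_mul_of_nonneg_left _ hqprod
            apply Real.exp_le_exp.mpr
            have := not_lt.mp hS
            rw [hc]
            linarith
        · rw [if_neg hmem, mul_zero, mul_zero]
    -- sum the split over ys and xs
    have hsum : cov n ≤ Real.exp (-c) * E n
        + ∑ xs : Fin n → X, ∑ ys : Fin n → Y, (∏ i, P (xs i) (ys i)) *
            (if (∑ i, g (xs i, ys i)) < (n:ℝ) * (H - δ) then (1:ℝ) else 0) := by
      rw [hcov n]
      have step1 : (∑ xs : Fin n → X, ∑ ys : Fin n → Y,
          (∏ i, P (xs i) (ys i)) * (if ys ∈ Γ n xs then (1:ℝ) else 0))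
          ≤ ∑ xs : Fin n → X, ∑ ys : Fin n → Y,
            ((∏ i, ∑ y, P (xs i) y) * Real.exp (-c) * (if ys ∈ Γ n xs then (1:ℝ) else 0)
              + (∏ i, P (xs i) (ys i)) *
                (if (∑ i, g (xs i, ys i)) < (n:ℝ) * (H - δ) then (1:ℝ) else 0)) :=
        Finset.sum_le_sum fun xs _ => Finset.sum_le_sum fun ys _ => split xs ys
      refine step1.trans (le_of_eq ?_)
      rw [Finset.sum_congr rfl (fun (xs : Fin n → X) _ => Finset.sum_add_distrib),
        Finset.sum_add_distrib]
      congr 1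
      rw [Finset.mul_sum]
      refine Finset.sum_congr rfl fun xs _ => ?_
      have hcard : ∑ ys : Fin n → Y, (if ys ∈ Γ n xs then (1:ℝ) else 0)
          = ((Γ n xs).card : ℝ) := by
        rw [Finset.sum_boole]
        congr 1
        rw [Finset.filter_mem_eq_inter, Finset.univ_inter]
      rw [← Finset.mul_sum, hcard]
      ring
    -- Chebyshev bound for the atypical part
    have hcheb : ∑ xs : Fin n → X, ∑ ys : Fin n → Y, (∏ i, P (xs i) (ys i)) *
        (if (∑ i, g (xs i, ys i)) < (n:ℝ) * (H - δ) then (1:ℝ) else 0)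
        ≤ W / ((n : ℝ) * δ^2) := by
      have htrans : (∑ xs : Fin n → X, ∑ ys : Fin n → Y, (∏ i, P (xs i) (ys i)) *
          (if (∑ i, g (xs i, ys i)) < (n:ℝ) * (H - δ) then (1:ℝ) else 0))
          = ∑ zs : Fin n → X × Y, (∏ k, p (zs k)) *
            (if (∑ i, g (zs i)) < (n:ℝ) * (H - δ) then (1:ℝ) else 0) :=
        sum_pair_transfer (fun zs => (∏ k, p (zs k)) *
          (if (∑ i, g (zs i)) < (n:ℝ) * (H - δ) then (1:ℝ) else 0))
      rw [htrans]
      have hchb := chebyshev_bound hn1 p g hp0 hp1 hδ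
      rw [← hH, ← hW] at hchb
      exact hchb
    -- combine
    have hA : Real.exp (-c) * E n ≤ Real.exp (-((n : ℝ) * δ)) := by
      calc Real.exp (-c) * E n ≤ Real.exp (-c) * Real.exp ((n : ℝ) * (H - 2*δ)) :=
          mul_le_mul_of_nonneg_left hEb (le_of_lt (Real.exp_pos _))
        _ = Real.exp (-((n : ℝ) * δ)) := by
          rw [← Real.exp_add]
          congr 1
          rw [hc]; ring
    have hB : W / ((n : ℝ) * δ^2) = W / δ^2 * (1 / (n : ℝ)) := by
      rw [div_mul_div_comm, mul_one, mul_comm (δ^2) ((n : ℝ))]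
    calc cov n ≤ Real.exp (-c) * E n + ∑ xs : Fin n → X, ∑ ys : Fin n → Y,
          (∏ i, P (xs i) (ys i)) *
            (if (∑ i, g (xs i, ys i)) < (n:ℝ) * (H - δ) then (1:ℝ) else 0) := hsum
      _ ≤ Real.exp (-((n : ℝ) * δ)) + W / ((n : ℝ) * δ^2) := add_le_add hA hcheb
      _ = Real.exp (-((n : ℝ) * δ)) + W / δ^2 * (1 / (n : ℝ)) := by rw [hB]
  -- coverage is nonnegative
  have hcov0 : ∀ n, 0 ≤ cov n := by
    intro n
    rw [hcov n]
    apply Finset.sum_nonneg; intro xs _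
    apply Finset.sum_nonneg; intro ys _
    apply mul_nonneg (Finset.prod_nonneg fun i _ => hPnonneg _ _)
    split <;> norm_num
  -- the bounding sequence tends to zero
  have hu : Filter.Tendsto (fun n : ℕ => Real.exp (-((n : ℝ) * δ)) + W / δ^2 * (1 / (n : ℝ)))
      Filter.atTop (nhds 0) := by
    have h1 : Filter.Tendsto (fun n : ℕ => Real.exp (-((n : ℝ) * δ))) Filter.atTop (nhds 0) := by
      have heq : ∀ n : ℕ, Real.exp (-((n : ℝ) * δ)) = (Real.exp (-δ))^n := by
        intro n
        rw [← Real.exp_nat_mul]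
        congr 1
        ring
      simp only [heq]
      exact tendsto_pow_atTop_nhds_zero_of_lt_one (le_of_lt (Real.exp_pos _))
        (Real.exp_lt_one_iff.mpr (by linarith))
    have h2 : Filter.Tendsto (fun n : ℕ => W / δ^2 * (1 / (n : ℝ))) Filter.atTop (nhds 0) := by
      have := tendsto_one_div_atTop_nhds_zero_nat.const_mul (W / δ^2)
      simpa using this
    simpa using h1.add h2
  exact squeeze_zero' (Filter.Eventually.of_forall hcov0) hmain hu
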